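/- Let μ be an unconditional log-concave measure on R^n, K a symmetric convex body, and u a standard basis vector. Then μ(S_u K) ≥ μ(K). -/

import Mathlib

open MeasureTheory Set Pointwise
open scoped InnerProductSpace ENNReal

noncomputable section

/-- `ℝ^n` with the Euclidean structure. -/
abbrev E (n : ℕ) := EuclideanSpace ℝ (Fin n)

/-- The polar body `K° = {y : ∀ x ∈ K, ⟨x,y⟩ ≤ 1}`. -/
def polarBody {n : ℕ} (K : Set (E n)) : Set (E n) := {y | ∀ x ∈ K, ⟪x, y⟫_ℝ ≤ 1}

/-- A set is unconditional if it is invariant under coordinate-wise sign changes. -/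
def Uncond {n : ℕ} (K : Set (E n)) : Prop :=
  ∀ x ∈ K, ∀ ε : Fin n → ℝ, (∀ i, ε i = 1 ∨ ε i = -1) →
    (WithLp.toLp 2 (fun i => ε i * x i) : E n) ∈ K

/-- A convex body: compact, convex, with nonempty interior. -/
def IsConvexBody {n : ℕ} (K : Set (E n)) : Prop :=
  IsCompact K ∧ Convex ℝ K ∧ (interior K).Nonempty

/-- The Steiner symmetral of `K` in direction `u`: over each point of `u^⊥` the fiber
`K_y` is replaced by `(K_y + (-K_y))/2`. -/
def steiner {n : ℕ} (u : E n) (K : Set (E n)) : Set (E n) :=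
  {x | ∃ s t : ℝ, (x - ⟪x, u⟫_ℝ • u + s • u) ∈ K ∧ (x - ⟪x, u⟫_ℝ • u + t • u) ∈ K ∧
    ⟪x, u⟫_ℝ = (s - t) / 2}

/-- 1-d comparison: for an even quasiconcave nonneg function, integral over `Icc a b`
is at most the integral over the centered interval of the same length. -/
lemma steiner_one_dim {g : ℝ → ℝ} (hm : Measurable g) (h0 : ∀ x, 0 ≤ g x)
    (hev : ∀ x, g (-x) = g x)
    (hqc : ∀ r : ℝ, 0 < r → ∀ x y z : ℝ, x ≤ y → y ≤ z → r ≤ g x → r ≤ g z → r ≤ g y)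
    (a b : ℝ) :
    ∫⁻ x in Icc a b, ENNReal.ofReal (g x) ≤
      ∫⁻ x in Icc (-((b - a) / 2)) ((b - a) / 2), ENNReal.ofReal (g x) := by
  set m := (b - a) / 2 with hm'
  rw [lintegral_eq_lintegral_meas_le _ (ae_of_all _ h0) hm.aemeasurable,
      lintegral_eq_lintegral_meas_le _ (ae_of_all _ h0) hm.aemeasurable]
  refine lintegral_mono_ae ((ae_restrict_iff' measurableSet_Ioi).2 (ae_of_all _ ?_))
  intro t ht
  have hSm : MeasurableSet {x : ℝ | t ≤ g x} := measurableSet_le measurable_const hm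
  rw [Measure.restrict_apply hSm, Measure.restrict_apply hSm]
  by_cases hc : ∃ s₀ ∈ {x : ℝ | t ≤ g x}, m < |s₀|
  · obtain ⟨s₀, hs₀, habs⟩ := hc
    have hgabs : t ≤ g |s₀| := by
      rcases abs_choice s₀ with h | h
      · rwa [h]
      · rw [h, hev]; exact hs₀
    have hsub : Icc (-m) m ⊆ {x : ℝ | t ≤ g x} := by
      intro x hx
      refine hqc t ht (-|s₀|) x |s₀| ?_ ?_ ?_ hgabs
      · linarith [hx.1]
      · linarith [hx.2]
      · rwa [hev]
    calc volume ({x : ℝ | t ≤ g x} ∩ Icc a b) ≤ volume (Icc a b) :=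
          measure_mono inter_subset_right
      _ = ENNReal.ofReal (b - a) := Real.volume_Icc
      _ = ENNReal.ofReal (m - -m) := by rw [hm']; ring_nf
      _ = volume (Icc (-m) m) := Real.volume_Icc.symm
      _ = volume ({x : ℝ | t ≤ g x} ∩ Icc (-m) m) := by
          rw [Set.inter_eq_right.mpr hsub]
  · push_neg at hc
    have hsub : {x : ℝ | t ≤ g x} ⊆ Icc (-m) m := by
      intro x hx
      exact abs_le.1 (hc x hx)
    calc volume ({x : ℝ | t ≤ g x} ∩ Icc a b) ≤ volume {x : ℝ | t ≤ g x} :=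
          measure_mono inter_subset_left
      _ = volume ({x : ℝ | t ≤ g x} ∩ Icc (-m) m) := by
          rw [Set.inter_eq_left.mpr hsub]


/-- The geometric mean body `K^{1/2} L^{1/2}`. -/
def geomMean {n : ℕ} (K L : Set (E n)) : Set (E n) :=
  {z | ∃ x ∈ K, ∃ y ∈ L, ∀ i, |z i| = |x i| ^ ((1 : ℝ) / 2) * |y i| ^ ((1 : ℝ) / 2)}

theorem blaschke_santalo_stmt (n : ℕ) (f : E n → ℝ) (hfm : Measurable f) (hf0 : ∀ x, 0 ≤ f x)
    (hflc : ∀ x y : E n, ∀ t : ℝ, t ∈ Set.Icc (0 : ℝ) 1 →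
      f x ^ (1 - t) * f y ^ t ≤ f ((1 - t) • x + t • y))
    (hfu : ∀ (x : E n) (ε : Fin n → ℝ), (∀ i, ε i = 1 ∨ ε i = -1) →
      f (WithLp.toLp 2 (fun i => ε i * x i) : E n) = f x)
    (μ : Measure (E n)) (hμ : μ = volume.withDensity fun x => ENNReal.ofReal (f x))
    (K : Set (E n)) (hK : IsConvexBody K) (hsym : K = -K)
    (i : Fin n) (u : E n) (hu : u = EuclideanSpace.single i (1 : ℝ)) :
    μ K ≤ μ (steiner u K) := by
  subst hμ
  -- basic facts about u
  have hui : ∀ j, u j = if j = i then 1 else 0 := by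
    intro j; rw [hu, EuclideanSpace.single_apply]
  have hu1 : ∀ x : E n, ⟪x, u⟫_ℝ = x i := by
    intro x; rw [hu, EuclideanSpace.inner_single_right]; simp
  -- the affine line map
  set L : E n → ℝ → E n := fun x c => x - x i • u + c • u with hL
  have hLapp : ∀ (x : E n) (c : ℝ) (j : Fin n), L x c j = if j = i then c else x j := by
    intro x c j
    rcases eq_or_ne j i with rfl | hj
    · simp [hL, PiLp.add_apply, PiLp.sub_apply, PiLp.smul_apply, hui]
    · simp [hL, PiLp.add_apply, PiLp.sub_apply, PiLp.smul_apply, hui, hj]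
  have hLi : ∀ (x : E n) (c : ℝ), L x c i = c := fun x c => by simp [hLapp]
  have hLL : ∀ (x : E n) (c c' : ℝ), L (L x c) c' = L x c' := by
    intro x c c'
    ext j
    rcases eq_or_ne j i with rfl | hj
    · simp [hLapp]
    · simp [hLapp, hj]
  have hLself : ∀ x : E n, L x (x i) = x := by
    intro x; ext j
    rcases eq_or_ne j i with rfl | hj
    · simp [hLapp]
    · simp [hLapp, hj]
  have hLaff : ∀ (x : E n) (θ c₁ c₂ : ℝ),
      L x ((1 - θ) * c₁ + θ * c₂) = (1 - θ) • L x c₁ + θ • L x c₂ := by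
    intro x θ c₁ c₂
    ext j
    rcases eq_or_ne j i with rfl | hj
    · simp [hLapp, PiLp.add_apply, PiLp.smul_apply]
    · simp [hLapp, hj, PiLp.add_apply, PiLp.smul_apply]; ring
  have hLcont : ∀ x : E n, Continuous (L x) := by
    intro x
    exact continuous_const.add (continuous_id.smul continuous_const)
  -- membership in steiner in terms of L
  have hmem : ∀ z : E n, z ∈ steiner u K ↔
      ∃ s t : ℝ, L z s ∈ K ∧ L z t ∈ K ∧ z i = (s - t) / 2 := by
    intro z
    simp only [steiner, mem_setOf_eq, hu1, hL]
  -- evenness of f along lines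
  have hfeven : ∀ (x : E n) (c : ℝ), f (L x (-c)) = f (L x c) := by
    intro x c
    have h := hfu (L x c) (fun j => if j = i then -1 else 1) (by
      intro j; rcases eq_or_ne j i with rfl | hj
      · simp
      · simp [hj])
    have hEq : (WithLp.toLp 2 (fun j => (if j = i then (-1:ℝ) else 1) * (L x c) j) : E n) = L x (-c) := by
      ext j
      rcases eq_or_ne j i with rfl | hj
      · simp [hLapp]
      · simp [hLapp, hj]
    rw [hEq] at h
    exact h
  -- quasiconcavity of f along lines
  have hfqc : ∀ (x : E n) (r : ℝ), 0 < r → ∀ c₁ c₂ c₃ : ℝ, c₁ ≤ c₂ → c₂ ≤ c₃ →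
      r ≤ f (L x c₁) → r ≤ f (L x c₃) → r ≤ f (L x c₂) := by
    intro x r hr c₁ c₂ c₃ h12 h23 hf1 hf3
    rcases eq_or_lt_of_le (h12.trans h23) with heq | hlt
    · have : c₂ = c₁ := le_antisymm (heq ▸ h23) h12
      rwa [this]
    · set θ := (c₂ - c₁) / (c₃ - c₁) with hθ
      have hd : (0:ℝ) < c₃ - c₁ := sub_pos.2 hlt
      have hθ0 : 0 ≤ θ := div_nonneg (by linarith) hd.le
      have hθ1 : θ ≤ 1 := (div_le_one hd).2 (by linarith)
      have hc₂ : (1 - θ) * c₁ + θ * c₃ = c₂ := by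
        have hθm : θ * (c₃ - c₁) = c₂ - c₁ := by rw [hθ]; exact div_mul_cancel₀ _ hd.ne'
        linear_combination hθm
      have hmemθ : θ ∈ Set.Icc (0:ℝ) 1 := ⟨hθ0, hθ1⟩
      have key := hflc (L x c₁) (L x c₃) θ hmemθ
      rw [← hLaff x θ c₁ c₃, hc₂] at key
      refine le_trans ?_ key
      calc r = r ^ ((1 - θ) + θ) := by norm_num
        _ = r ^ (1 - θ) * r ^ θ := Real.rpow_add hr _ _
        _ ≤ f (L x c₁) ^ (1 - θ) * f (L x c₃) ^ θ := by
            apply mul_le_mul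
            · exact Real.rpow_le_rpow hr.le hf1 (by linarith)
            · exact Real.rpow_le_rpow hr.le hf3 hθ0
            · exact Real.rpow_nonneg hr.le _
            · exact Real.rpow_nonneg (hf0 _) _
  -- measurability of K and steiner
  have hKm : MeasurableSet K := hK.1.measurableSet
  have hevali : Continuous fun z : E n => z i := by
    have hcc : Continuous fun z : E n => ⟪z, u⟫_ℝ := Continuous.inner continuous_id continuous_const
    simpa only [hu1] using hcc
  have hΦcont : Continuous (fun pq : E n × E n => L pq.1 ((pq.1 i - pq.2 i) / 2)) := by
    simp only [hL]
    exact ((continuous_fst.sub (((hevali.comp continuous_fst)).smul continuous_const)).add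
      ((((hevali.comp continuous_fst).sub (hevali.comp continuous_snd)).div_const 2).smul
        continuous_const))
  have hD0cont : Continuous (fun z : E n => L z 0) := by
    simp only [hL]
    exact (continuous_id.sub ((hevali).smul continuous_const)).add
      continuous_const
  have hDc : IsCompact ((K ×ˢ K) ∩ {pq : E n × E n | L pq.1 0 = L pq.2 0}) :=
    (hK.1.prod hK.1).inter_right
      (isClosed_eq (hD0cont.comp continuous_fst) (hD0cont.comp continuous_snd))
  have himg : steiner u K = (fun pq : E n × E n => L pq.1 ((pq.1 i - pq.2 i) / 2)) ''
      ((K ×ˢ K) ∩ {pq : E n × E n | L pq.1 0 = L pq.2 0}) := by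
    ext z
    rw [hmem]
    constructor
    · rintro ⟨s, t, hs, ht, hzi⟩
      refine ⟨(L z s, L z t), ⟨⟨hs, ht⟩, ?_⟩, ?_⟩
      · show L (L z s) 0 = L (L z t) 0
        rw [hLL, hLL]
      · show L (L z s) ((L z s i - L z t i) / 2) = z
        rw [hLi, hLi, hLL, ← hzi, hLself]
    · rintro ⟨⟨p, q⟩, ⟨⟨hp, hq⟩, hyeq⟩, rfl⟩
      simp only at hyeq ⊢
      refine ⟨p i, q i, ?_, ?_, ?_⟩
      · rw [hLL, hLself]; exact hp
      · rw [hLL]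
        have : L p (q i) = q := by
          ext j
          rcases eq_or_ne j i with rfl | hj
          · simp [hLapp]
          · have := congrArg (fun v : E n => v j) (show L p 0 = L q 0 from hyeq)
            simp only [hLapp, hj, if_neg hj] at this ⊢
            exact this
        rw [this]; exact hq
      · rw [hLi]
  have hscpt : IsCompact (steiner u K) := himg ▸ hDc.image hΦcont
  have hSm : MeasurableSet (steiner u K) := hscpt.measurableSet
  -- rewrite the measure as lintegrals of indicators over the pi measure
  set h : E n → ℝ≥0∞ := fun z => ENNReal.ofReal (f z) with hh
  rw [withDensity_apply _ hKm, withDensity_apply _ hSm, ← lintegral_indicator hKm,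
    ← lintegral_indicator hSm]
  set eqv := (MeasurableEquiv.toLp 2 (Fin n → ℝ)).symm with heqv
  have hmp : MeasurePreserving (⇑eqv.symm) (volume : Measure (Fin n → ℝ)) volume :=
    (EuclideanSpace.volume_preserving_symm_measurableEquiv_toLp (Fin n)).symm
  have hhm : Measurable h := hfm.ennreal_ofReal
  have hFkm : Measurable fun p : Fin n → ℝ => K.indicator h (eqv.symm p) :=
    (hhm.indicator hKm).comp eqv.symm.measurable
  have hFsm : Measurable fun p : Fin n → ℝ => (steiner u K).indicator h (eqv.symm p) :=
    (hhm.indicator hSm).comp eqv.symm.measurable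
  rw [← hmp.lintegral_comp ((hhm.indicator hKm)), ← hmp.lintegral_comp ((hhm.indicator hSm))]
  rw [volume_pi]
  rw [lintegral_eq_lmarginal_univ (fun _ => (0 : ℝ)),
    lintegral_eq_lmarginal_univ (fun _ => (0 : ℝ))]
  rw [lmarginal_erase' _ hFkm (Finset.mem_univ i), lmarginal_erase' _ hFsm (Finset.mem_univ i)]
  refine lmarginal_mono (fun p => ?_) _
  -- pointwise fiber inequality
  simp only
  set x : E n := eqv.symm p with hx
  have hupdc : ∀ c : ℝ, eqv.symm (Function.update p i c) = L x c := by
    intro c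
    ext j
    rcases eq_or_ne j i with rfl | hj
    · simp [heqv, MeasurableEquiv.coe_toLp, hLapp]
    · simp [heqv, MeasurableEquiv.coe_toLp, hLapp, hj,
        Function.update_of_ne hj, hx]
  simp only [hupdc]
  have hindK : (fun c : ℝ => K.indicator h (L x c)) =
      fun c => ((L x ⁻¹' K).indicator (fun c => h (L x c))) c := by
    funext c
    rw [← Set.indicator_comp_right (L x) (g := h)]
    rfl
  have hindS : (fun c : ℝ => (steiner u K).indicator h (L x c)) =
      fun c => ((L x ⁻¹' steiner u K).indicator (fun c => h (L x c))) c := by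
    funext c
    rw [← Set.indicator_comp_right (L x) (g := h)]
    rfl
  have hAm : MeasurableSet (L x ⁻¹' K) := hKm.preimage (hLcont x).measurable
  have hBm : MeasurableSet (L x ⁻¹' steiner u K) := hSm.preimage (hLcont x).measurable
  calc ∫⁻ c, K.indicator h (L x c)
      = ∫⁻ c in L x ⁻¹' K, h (L x c) := by rw [hindK, lintegral_indicator hAm]
    _ ≤ ∫⁻ c in L x ⁻¹' steiner u K, h (L x c) := ?_
    _ = ∫⁻ c, (steiner u K).indicator h (L x c) := by rw [hindS, lintegral_indicator hBm]
  -- the core fiber comparison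
  set A := L x ⁻¹' K with hA'
  rcases A.eq_empty_or_nonempty with hAe | hAne
  · simp [hAe]
  obtain ⟨R, hR⟩ := hK.1.isBounded.subset_closedBall 0
  have hAsub : A ⊆ Icc (-R) R := by
    intro c hc
    have h1 : ‖L x c‖ ≤ R := by
      have := hR hc
      rwa [Metric.mem_closedBall, dist_zero_right] at this
    have h2 : |c| ≤ ‖L x c‖ := by
      have h3 := abs_real_inner_le_norm (L x c) u
      rw [hu1, hLi] at h3
      have hnu : ‖u‖ = 1 := by rw [hu]; simp
      rw [hnu, mul_one] at h3
      exact h3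
    exact abs_le.1 (h2.trans h1)
  have hAcl : IsClosed A := hK.1.isClosed.preimage (hLcont x)
  have hAcpt : IsCompact A := isCompact_Icc.of_isClosed_subset hAcl hAsub
  set a := sInf A with ha'
  set b := sSup A with hb'
  have ha : a ∈ A := hAcpt.sInf_mem hAne
  have hb : b ∈ A := hAcpt.sSup_mem hAne
  have hAIcc : A ⊆ Icc a b := fun c hc =>
    ⟨csInf_le hAcpt.bddBelow hc, le_csSup hAcpt.bddAbove hc⟩
  have hconvA : Convex ℝ A := by
    intro c₁ hc₁ c₂ hc₂ α β hα hβ hαβ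
    have hα' : α = 1 - β := by linarith
    show L x (α • c₁ + β • c₂) ∈ K
    rw [smul_eq_mul, smul_eq_mul, hα', hLaff]
    exact hK.2.1 hc₁ hc₂ (by linarith) hβ (by linarith)
  have hIccA : Icc a b ⊆ A := hconvA.ordConnected.out ha hb
  have hBIcc : Icc (-((b - a) / 2)) ((b - a) / 2) ⊆ L x ⁻¹' steiner u K := by
    intro c hc
    have hc1 : -((b - a) / 2) ≤ c := hc.1
    have hc2 : c ≤ (b - a) / 2 := hc.2
    show L x c ∈ steiner u K
    rw [hmem]
    rcases le_or_gt 0 c with hc0 | hc0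
    · refine ⟨a + 2 * c, a, ?_, ?_, ?_⟩
      · rw [hLL]; exact hIccA ⟨by linarith, by linarith⟩
      · rw [hLL]; exact hIccA ⟨le_refl a, by linarith⟩
      · rw [hLi]; ring
    · refine ⟨a, a - 2 * c, ?_, ?_, ?_⟩
      · rw [hLL]; exact hIccA ⟨le_refl a, by linarith⟩
      · rw [hLL]; exact hIccA ⟨by linarith, by linarith⟩
      · rw [hLi]; ring
  calc ∫⁻ c in A, h (L x c) ≤ ∫⁻ c in Icc a b, h (L x c) := lintegral_mono_set hAIcc
    _ ≤ ∫⁻ c in Icc (-((b - a) / 2)) ((b - a) / 2), h (L x c) := by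
        have key := steiner_one_dim (g := fun c => f (L x c))
          (hfm.comp (hLcont x).measurable) (fun c => hf0 _) (hfeven x) (hfqc x) a b
        simpa only [hh] using key
    _ ≤ ∫⁻ c in L x ⁻¹' steiner u K, h (L x c) := lintegral_mono_set hBIcc
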